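/- Let G be a finite weighted graph with U(1)-signature s, μ : V → ℝ₊, and let h₁^s(μ) = min over nonempty V1 ⊆ V of (ι^s(V1) + |E(V1,V1^c)|) / vol_μ(V1). Then the first eigenvalue of the magnetic Laplacian satisfies λ₁(Δ_μ^s) ≤ 2 h₁^s(μ). -/
import Mathlib


open Finset

/-- Rayleigh quotient of `f` for the magnetic Laplacian with weights `w`,
vertex measure `μ` and signature `s` (each unordered edge counted once). -/
noncomputable def rayleigh {V : Type*} [Fintype V] (G : SimpleGraph V) [DecidableRel G.Adj]
    (w : V → V → ℝ) (μ : V → ℝ) (s : V → V → ℂ) (f : V → ℂ) : ℝ :=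
  ((1 / 2) * ∑ u : V, ∑ v : V, if G.Adj u v then w u v * ‖f u - s u v * f v‖ ^ 2 else 0) /
    (∑ u : V, ‖f u‖ ^ 2 * μ u)

/-- The first eigenvalue of the magnetic Laplacian, characterized by the
variational (min-max) principle as the infimum of Rayleigh quotients. -/
noncomputable def lam1 {V : Type*} [Fintype V] (G : SimpleGraph V) [DecidableRel G.Adj]
    (w : V → V → ℝ) (μ : V → ℝ) (s : V → V → ℂ) : ℝ :=
  sInf { x : ℝ | ∃ f : V → ℂ, f ≠ 0 ∧ x = rayleigh G w μ s f }

/-- Frustration index of `V1` with `U(1)`-valued switching functions. -/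
noncomputable def frusIdx {V : Type*} [Fintype V] (G : SimpleGraph V) [DecidableRel G.Adj]
    (w : V → V → ℝ) (s : V → V → ℂ) (V1 : Finset V) : ℝ :=
  sInf { x : ℝ | ∃ τ : V → ℂ, (∀ u, ‖τ u‖ = 1) ∧
    x = (1 / 2) * ∑ u ∈ V1, ∑ v ∈ V1, if G.Adj u v then w u v * ‖τ u - s u v * τ v‖ else 0 }

/-- Weighted boundary measure `|E(V1, V1ᶜ)|`. -/
noncomputable def bdry {V : Type*} [Fintype V] [DecidableEq V] (G : SimpleGraph V)
    [DecidableRel G.Adj] (w : V → V → ℝ) (V1 : Finset V) : ℝ :=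
  ∑ u ∈ V1, ∑ v ∈ V1ᶜ, if G.Adj u v then w u v else 0

/-- `μ`-volume of `V1`. -/
noncomputable def vol {V : Type*} [Fintype V] (μ : V → ℝ) (V1 : Finset V) : ℝ :=
  ∑ u ∈ V1, μ u

/-- The Cheeger constant `h₁ˢ(μ)`. -/
noncomputable def cheeger1 {V : Type*} [Fintype V] [DecidableEq V] (G : SimpleGraph V)
    [DecidableRel G.Adj] (w : V → V → ℝ) (μ : V → ℝ) (s : V → V → ℂ) : ℝ :=
  sInf { x : ℝ | ∃ V1 : Finset V, V1.Nonempty ∧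
    x = (frusIdx G w s V1 + bdry G w V1) / vol μ V1 }

/-- Maximal `μ`-degree `d_μ`. -/
noncomputable def dmu {V : Type*} [Fintype V] (G : SimpleGraph V) [DecidableRel G.Adj]
    (w : V → V → ℝ) (μ : V → ℝ) : ℝ :=
  ⨆ u : V, (∑ v : V, if G.Adj u v then w u v else 0) / μ u

theorem stmt_8 {V : Type*} [Fintype V] [DecidableEq V] (G : SimpleGraph V) [DecidableRel G.Adj]
    (w : V → V → ℝ) (μ : V → ℝ) (s : V → V → ℂ)
    (hw_sym : ∀ u v, w u v = w v u)
    (hw_pos : ∀ u v, G.Adj u v → 0 < w u v)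
    (hμ : ∀ u, 0 < μ u)
    (hs_unit : ∀ u v, G.Adj u v → ‖s u v‖ = 1)
    (hs_inv : ∀ u v, G.Adj u v → s v u = (s u v)⁻¹) :
    lam1 G w μ s ≤ 2 * cheeger1 G w μ s := by
  classical
  rcases isEmpty_or_nonempty V with hV | hV
  · have h1 : lam1 G w μ s = 0 := by
      unfold lam1
      have hE : { x : ℝ | ∃ f : V → ℂ, f ≠ 0 ∧ x = rayleigh G w μ s f } = ∅ := by
        ext x
        simp only [Set.mem_setOf_eq, Set.mem_empty_iff_false, iff_false, not_exists]
        rintro f ⟨hf, -⟩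
        exact hf (funext fun u => (hV.false u).elim)
      rw [hE, Real.sInf_empty]
    have h2 : cheeger1 G w μ s = 0 := by
      unfold cheeger1
      have hE : { x : ℝ | ∃ V1 : Finset V, V1.Nonempty ∧
          x = (frusIdx G w s V1 + bdry G w V1) / vol μ V1 } = ∅ := by
        ext x
        simp only [Set.mem_setOf_eq, Set.mem_empty_iff_false, iff_false, not_exists]
        rintro V1 ⟨⟨a, -⟩, -⟩
        exact hV.false a
      rw [hE, Real.sInf_empty]
    rw [h1, h2]; norm_num
  · have hbdd : BddBelow {x : ℝ | ∃ f : V → ℂ, f ≠ 0 ∧ x = rayleigh G w μ s f} := by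
      refine ⟨0, ?_⟩
      rintro x ⟨g, -, rfl⟩
      unfold rayleigh
      apply div_nonneg
      · apply mul_nonneg (by norm_num)
        refine Finset.sum_nonneg fun u _ => Finset.sum_nonneg fun v _ => ?_
        split
        · exact mul_nonneg (hw_pos u v ‹_›).le (sq_nonneg _)
        · exact le_refl 0
      · exact Finset.sum_nonneg fun u _ => mul_nonneg (sq_nonneg _) (hμ u).le
    have pull : ∀ (T : Finset V) (h : V → ℝ),
        (∑ u : V, if u ∈ T then h u else 0) = ∑ u ∈ T, h u := fun T h => by
      rw [Finset.sum_ite_mem, Finset.univ_inter]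
    have key : ∀ V1 : Finset V, V1.Nonempty →
        lam1 G w μ s / 2 ≤ (frusIdx G w s V1 + bdry G w V1) / vol μ V1 := by
      intro V1 hne
      have hvol : 0 < vol μ V1 := Finset.sum_pos (fun u _ => hμ u) hne
      have hB : 0 ≤ bdry G w V1 := by
        refine Finset.sum_nonneg fun u _ => Finset.sum_nonneg fun v _ => ?_
        split
        · exact (hw_pos u v ‹_›).le
        · exact le_refl 0
      have claim1 : ∀ τ : V → ℂ, (∀ u, ‖τ u‖ = 1) →
          lam1 G w μ s * vol μ V1 ≤
            2 * ((1 / 2) * ∑ u ∈ V1, ∑ v ∈ V1,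
              if G.Adj u v then w u v * ‖τ u - s u v * τ v‖ else 0) + bdry G w V1 := by
        intro τ hτ
        set f : V → ℂ := fun u => if u ∈ V1 then τ u else 0 with hf
        have hfne : f ≠ 0 := by
          obtain ⟨a, ha⟩ := hne
          intro h
          have h0 : f a = 0 := congrFun h a
          have h1 : ‖f a‖ = 1 := by simp only [hf, if_pos ha]; exact hτ a
          rw [h0] at h1; simp at h1
        have hden : (∑ u : V, ‖f u‖ ^ 2 * μ u) = vol μ V1 := by
          have hterm : ∀ u : V, ‖f u‖ ^ 2 * μ u = if u ∈ V1 then μ u else 0 := by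
            intro u
            by_cases h : u ∈ V1 <;> simp [hf, h, hτ u]
          rw [Finset.sum_congr rfl fun u _ => hterm u, pull]
          rfl
        have hpt : ∀ u v : V,
            (if G.Adj u v then w u v * ‖f u - s u v * f v‖ ^ 2 else 0) ≤
              2 * (if u ∈ V1 then if v ∈ V1 then
                    (if G.Adj u v then w u v * ‖τ u - s u v * τ v‖ else 0) else 0 else 0)
              + ((if u ∈ V1 then if v ∈ V1ᶜ then (if G.Adj u v then w u v else 0) else 0 else 0)
              + (if u ∈ V1ᶜ then if v ∈ V1 then (if G.Adj u v then w u v else 0) else 0 else 0)) := by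
          intro u v
          by_cases hadj : G.Adj u v
          · have hw := hw_pos u v hadj
            have hs := hs_unit u v hadj
            by_cases hu : u ∈ V1 <;> by_cases hv : v ∈ V1 <;>
              simp only [hf, hadj, hu, hv, if_true, if_false, Finset.mem_compl,
                not_true, not_false_iff, if_pos, if_neg, mul_zero, sub_zero, zero_sub,
                norm_neg, norm_mul, hs, hτ, one_mul, mul_one, norm_zero, add_zero, zero_add]
            · have hr2 : ‖τ u - s u v * τ v‖ ≤ 2 := by
                calc ‖τ u - s u v * τ v‖ ≤ ‖τ u‖ + ‖s u v * τ v‖ := norm_sub_le _ _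
                _ = 2 := by rw [norm_mul, hτ u, hτ v, hs]; norm_num
              have hr0 : (0:ℝ) ≤ ‖τ u - s u v * τ v‖ := norm_nonneg _
              nlinarith [hw, hr2, hr0, mul_nonneg hw.le hr0,
                mul_nonneg (mul_nonneg hw.le hr0) (sub_nonneg.mpr hr2)]
            · nlinarith [hw]
            · nlinarith [hw]
            · nlinarith [hw]
          · simp [hadj]
        have hG1 : (∑ u : V, ∑ v : V, (if u ∈ V1 then if v ∈ V1 then
              (if G.Adj u v then w u v * ‖τ u - s u v * τ v‖ else 0) else 0 else 0))
            = ∑ u ∈ V1, ∑ v ∈ V1, (if G.Adj u v then w u v * ‖τ u - s u v * τ v‖ else 0) := by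
          rw [← pull V1 (fun u => ∑ v ∈ V1,
            (if G.Adj u v then w u v * ‖τ u - s u v * τ v‖ else 0))]
          refine Finset.sum_congr rfl fun u _ => ?_
          by_cases h : u ∈ V1 <;> simp [h, pull]
        have hB1 : (∑ u : V, ∑ v : V, (if u ∈ V1 then if v ∈ V1ᶜ then
              (if G.Adj u v then w u v else 0) else 0 else 0)) = bdry G w V1 := by
          unfold bdry
          rw [← pull V1 (fun u => ∑ v ∈ V1ᶜ, (if G.Adj u v then w u v else 0))]
          refine Finset.sum_congr rfl fun u _ => ?_
          by_cases h : u ∈ V1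
          · simp only [if_pos h]; exact pull _ _
          · simp only [if_neg h, Finset.sum_const_zero]
        have hB2 : (∑ u : V, ∑ v : V, (if u ∈ V1ᶜ then if v ∈ V1 then
              (if G.Adj u v then w u v else 0) else 0 else 0)) = bdry G w V1 := by
          have step1 : (∑ u : V, ∑ v : V, (if u ∈ V1ᶜ then if v ∈ V1 then
              (if G.Adj u v then w u v else 0) else 0 else 0))
              = ∑ u ∈ V1ᶜ, ∑ v ∈ V1, (if G.Adj u v then w u v else 0) := by
            rw [← pull V1ᶜ (fun u => ∑ v ∈ V1, (if G.Adj u v then w u v else 0))]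
            refine Finset.sum_congr rfl fun u _ => ?_
            by_cases h : u ∈ V1ᶜ
            · simp only [if_pos h]; exact pull _ _
            · simp only [if_neg h, Finset.sum_const_zero]
          rw [step1, Finset.sum_comm]
          unfold bdry
          refine Finset.sum_congr rfl fun v _ => Finset.sum_congr rfl fun u _ => ?_
          by_cases h : G.Adj u v
          · rw [if_pos h, if_pos h.symm, hw_sym]
          · rw [if_neg h, if_neg fun h' => h h'.symm]
        have hnum : (∑ u : V, ∑ v : V, if G.Adj u v then w u v * ‖f u - s u v * f v‖ ^ 2 else 0)
            ≤ 2 * (∑ u ∈ V1, ∑ v ∈ V1, (if G.Adj u v then w u v * ‖τ u - s u v * τ v‖ else 0))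
              + 2 * bdry G w V1 := by
          calc (∑ u : V, ∑ v : V, if G.Adj u v then w u v * ‖f u - s u v * f v‖ ^ 2 else 0)
              ≤ ∑ u : V, ∑ v : V,
                (2 * (if u ∈ V1 then if v ∈ V1 then
                    (if G.Adj u v then w u v * ‖τ u - s u v * τ v‖ else 0) else 0 else 0)
                + ((if u ∈ V1 then if v ∈ V1ᶜ then (if G.Adj u v then w u v else 0) else 0 else 0)
                + (if u ∈ V1ᶜ then if v ∈ V1 then (if G.Adj u v then w u v else 0) else 0 else 0))) :=
                Finset.sum_le_sum fun u _ => Finset.sum_le_sum fun v _ => hpt u v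
          _ = 2 * (∑ u ∈ V1, ∑ v ∈ V1, (if G.Adj u v then w u v * ‖τ u - s u v * τ v‖ else 0))
              + 2 * bdry G w V1 := by
            simp only [Finset.sum_add_distrib, ← Finset.mul_sum]
            rw [hG1, hB1, hB2]; ring
        have hray : rayleigh G w μ s f ≤
            ((∑ u ∈ V1, ∑ v ∈ V1, (if G.Adj u v then w u v * ‖τ u - s u v * τ v‖ else 0))
              + bdry G w V1) / vol μ V1 := by
          unfold rayleigh
          rw [hden]
          have h12 : (1 / 2 : ℝ) * (∑ u : V, ∑ v : V,
              if G.Adj u v then w u v * ‖f u - s u v * f v‖ ^ 2 else 0) ≤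
              (∑ u ∈ V1, ∑ v ∈ V1, (if G.Adj u v then w u v * ‖τ u - s u v * τ v‖ else 0))
              + bdry G w V1 := by linarith [hnum]
          exact div_le_div_of_nonneg_right h12 hvol.le
        have hle : lam1 G w μ s ≤ rayleigh G w μ s f := csInf_le hbdd ⟨f, hfne, rfl⟩
        have hle2 := hle.trans hray
        rw [le_div_iff₀ hvol] at hle2
        linarith
      have hfr : (lam1 G w μ s * vol μ V1 - bdry G w V1) / 2 ≤ frusIdx G w s V1 := by
        apply le_csInf
        · exact ⟨_, fun _ => (1 : ℂ), fun u => by simp, rfl⟩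
        · rintro x ⟨τ, hτ, rfl⟩
          have := claim1 τ hτ
          linarith
      rw [div_le_div_iff₀ (by norm_num : (0:ℝ) < 2) hvol]
      linarith
    have hch : lam1 G w μ s / 2 ≤ cheeger1 G w μ s := by
      apply le_csInf
      · exact ⟨_, Finset.univ, Finset.univ_nonempty, rfl⟩
      · rintro x ⟨V1, hne, rfl⟩
        exact key V1 hne
    linarith
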